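/- Let β : ℝ → ℝ be monotone (nondecreasing) with β(0) = 0, let η > 0 and R ≥ 0, and assume β(r)·r ≥ η·r² for all r with |r| ≥ R. Let ε > 0 satisfy ε ≤ 1 and ε·η ≤ 1, and let j : ℝ → ℝ be a resolvent of β at parameter ε, with associated Yosida approximation β_ε. Then β_ε(r)·r ≥ (η/2)·r² for every r with |r| ≥ R + |β(R)| + |β(−R)|. -/
import Mathlib

lemma stmt_3_key (η ε x b : ℝ) (hη : 0 < η) (hε : 0 < ε) (hεη : ε * η ≤ 1)
    (h : b * x ≥ η * x ^ 2) : b * (x + ε * b) ≥ η / 2 * (x + ε * b) ^ 2 := by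
  nlinarith [mul_nonneg ((by positivity : (0:ℝ) ≤ η / 2)) (sq_nonneg (x - ε * b)),
    mul_nonneg (mul_nonneg hε.le (by linarith : (0:ℝ) ≤ 1 - ε * η)) (sq_nonneg b)]

/-- Estimate (3.8) of the paper (convex case): the quadratic coercivity of a
monotone function `β` (with `β 0 = 0`) for large arguments transfers to its
Yosida regularization `β_ε(r) = (r - j(r))/ε` (where `j` is a resolvent, i.e.
`j r + ε * β (j r) = r`), uniformly for small `ε`, with constant halved and a
slightly enlarged threshold. -/
theorem stmt_3 (β j : ℝ → ℝ) (hβ : Monotone β) (hβ0 : β 0 = 0)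
    (η R ε : ℝ) (hη : 0 < η) (hR : 0 ≤ R) (hε : 0 < ε)
    (hε1 : ε ≤ 1) (hεη : ε * η ≤ 1)
    (hcoer : ∀ r : ℝ, R ≤ |r| → β r * r ≥ η * r ^ 2)
    (hres : ∀ r : ℝ, j r + ε * β (j r) = r) :
    ∀ r : ℝ, R + |β R| + |β (-R)| ≤ |r| →
      (r - j r) / ε * r ≥ η / 2 * r ^ 2 := by
  intro r hr
  set x := j r with hxdef
  have hx : x + ε * β x = r := hres r
  have hβR : 0 ≤ β R := hβ0 ▸ hβ hR
  have hβmR : β (-R) ≤ 0 := hβ0 ▸ hβ (by linarith : -R ≤ 0)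
  have habsR : |β R| = β R := abs_of_nonneg hβR
  have habsmR : |β (-R)| = -β (-R) := abs_of_nonpos hβmR
  rw [habsR, habsmR] at hr
  -- rewrite (r - x)/ε as β x
  have hrx : (r - x) / ε = β x := by
    field_simp
    linarith
  rw [hrx]
  rcases le_or_gt 0 r with hr0 | hr0
  · rw [abs_of_nonneg hr0] at hr
    have hxR : R ≤ x := by
      by_contra h
      push_neg at h
      have h1 : β x ≤ β R := hβ h.le
      have h2 : ε * β x ≤ ε * β R := by nlinarith
      have h3 : ε * β R ≤ β R := by nlinarith
      linarith
    have hc : β x * x ≥ η * x ^ 2 := hcoer x (hxR.trans (le_abs_self x))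
    have := stmt_3_key η ε x (β x) hη hε hεη hc
    rw [hx] at this
    exact this
  · rw [abs_of_neg hr0] at hr
    have hxR : x ≤ -R := by
      by_contra h
      push_neg at h
      have h1 : β (-R) ≤ β x := hβ h.le
      have h2 : ε * β (-R) ≤ ε * β x := by nlinarith
      have h3 : β (-R) ≤ ε * β (-R) := by nlinarith
      linarith
    have habs : R ≤ |x| := by
      rw [abs_of_nonpos (by linarith : x ≤ 0)]; linarith
    have hc : β x * x ≥ η * x ^ 2 := hcoer x habs
    have := stmt_3_key η ε x (β x) hη hε hεη hc
    rw [hx] at this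
    exact this
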